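/- Let $V : \mathcal{F} \to \mathbb{R}$, $u : X \to \mathbb{R}$, and suppose $V(f) = \Phi(u \circ f) + \int u(f)\, dm$ for all $f \in \mathcal{F}$, where $m$ is a finitely additive probability on an algebra $\mathcal{A} \supseteq \mathcal{A}_u$ with every $u \circ f \in L^1(m)$, and $\Phi$ is a positive linear functional on the span of $\{u \circ f : f \in \mathcal{F}\}$ vanishing on bounded functions. If in addition $\lim_{m(A) \to 0} V(f \text{ restricted to } A^c \text{ patched with } x) = V(f)$ for every $f$ (i.e., for every sequence $A_n \in \mathcal{A}$ with $m(A_n) \to 0$, $V(f A_n^c x) \to V(f)$, where $fA^c x$ equals $f$ on $A^c$ and the constant $x$ on $A$, and $u(x)=0$), then $\Phi(u \circ f) = 0$ for all $f$, so $V(f) = \int u(f)\, dm$. -/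

import Mathlib

open MeasureTheory

/-- An algebra of subsets of `Ω`. -/
structure SetAlgebra (Ω : Type*) where
  sets : Set (Set Ω)
  empty_mem : ∅ ∈ sets
  compl_mem : ∀ A ∈ sets, Aᶜ ∈ sets
  union_mem : ∀ A ∈ sets, ∀ B ∈ sets, A ∪ B ∈ sets

/-- A finitely additive probability on an algebra of sets. -/
structure FinAddProb {Ω : Type*} (𝒜 : SetAlgebra Ω) where
  toFun : Set Ω → ℝ
  nonneg : ∀ A, 0 ≤ toFun A
  empty : toFun ∅ = 0
  univ : toFun Set.univ = 1
  mono : ∀ A ∈ 𝒜.sets, ∀ B ∈ 𝒜.sets, A ⊆ B → toFun A ≤ toFun B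
  additive : ∀ A ∈ 𝒜.sets, ∀ B ∈ 𝒜.sets, Disjoint A B → toFun (A ∪ B) = toFun A + toFun B

/-- The (Choquet-type) integral of a function `h` with respect to a monotone set
function `m` with `m Ω = 1`: for finitely additive probabilities and bounded measurable
`h` this is the Dunford–Schwartz integral `∫ h dm`. -/
noncomputable def faInt {Ω : Type*} (m : Set Ω → ℝ) (h : Ω → ℝ) : ℝ :=
  (∫ t in Set.Ioi (0 : ℝ), m {ω | t < h ω}) +
    ∫ t in Set.Iio (0 : ℝ), (m {ω | t < h ω} - 1)

/-- `h` is measurable with respect to the algebra `𝒜`. -/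
def AMeasurable {Ω : Type*} (𝒜 : SetAlgebra Ω) (h : Ω → ℝ) : Prop :=
  ∀ t : ℝ, {ω | t < h ω} ∈ 𝒜.sets ∧ {ω | h ω < t} ∈ 𝒜.sets

/-- `h` is bounded. -/
def IsBdd {Ω : Type*} (h : Ω → ℝ) : Prop := ∃ c : ℝ, ∀ ω, |h ω| ≤ c

open Filter
open scoped Classical

/-- `h` is integrable with respect to the finitely additive probability `m`. -/
def FAIntegrable {Ω : Type*} (m : Set Ω → ℝ) (h : Ω → ℝ) : Prop :=
  IntegrableOn (fun t : ℝ => m {ω | t < h ω}) (Set.Ioi 0) volume ∧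
  IntegrableOn (fun t : ℝ => m {ω | t < h ω} - 1) (Set.Iio 0) volume

/-- If `V f = Φ(u∘f) + ∫ u(f) dm` with `Φ` a positive linear functional
vanishing on bounded functions of the span of `{u∘f}`, and `V` is continuous with respect
to `m`-small modifications (patching `f` with the reference outcome `x`, `u x = 0`, on
small sets), then `Φ(u∘f) = 0` and `V f = ∫ u(f) dm` for every act `f`. -/
lemma tail_Ioi' (G : ℝ → ℝ) (hA : Antitone G) (h0 : ∀ t, 0 ≤ G t)
    (hI : IntegrableOn G (Set.Ioi 0) volume) :
    Tendsto (fun n : ℕ => G n) atTop (nhds 0) := by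
  have hanti : Antitone (fun n : ℕ => G n) := fun a b hab => hA (by exact_mod_cast hab)
  have hbdd : BddBelow (Set.range fun n : ℕ => G n) := ⟨0, by rintro _ ⟨n, rfl⟩; exact h0 _⟩
  have hlim := tendsto_atTop_ciInf hanti hbdd
  set L := ⨅ n : ℕ, G n with hL
  have hL0 : 0 ≤ L := le_ciInf fun n => h0 _
  rcases eq_or_lt_of_le hL0 with h | h
  · rwa [← h] at hlim
  · exfalso
    have hGe : ∀ t ∈ Set.Ioi (0:ℝ), L ≤ G t := by
      intro t _
      calc L ≤ G (⌈t⌉₊ : ℕ) := ciInf_le hbdd _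
        _ ≤ G t := hA (Nat.le_ceil t)
    have hconst : IntegrableOn (fun _ : ℝ => L) (Set.Ioi 0) volume := by
      refine Integrable.mono' hI aestronglyMeasurable_const ?_
      filter_upwards [ae_restrict_mem measurableSet_Ioi] with t ht
      rw [Real.norm_eq_abs, abs_of_nonneg hL0]
      exact hGe t ht
    rw [integrableOn_const_iff] at hconst
    rcases hconst with h' | h'
    · exact (ne_of_gt h) (by simpa using h')
    · rw [Real.volume_Ioi] at h'; exact absurd h' (by simp)

lemma tail_Iio' (K : ℝ → ℝ) (hA : Antitone K) (h0 : ∀ t, K t ≤ 0)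
    (hI : IntegrableOn K (Set.Iio 0) volume) :
    Tendsto (fun n : ℕ => K (-(n:ℝ))) atTop (nhds 0) := by
  have hcomp : IntegrableOn (fun t : ℝ => K (-t)) (Set.Ioi 0) volume := by
    have := ((Measure.measurePreserving_neg (volume : Measure ℝ)).integrableOn_comp_preimage
      (MeasurableEquiv.neg ℝ).measurableEmbedding).2 hI
    simpa [Function.comp_def] using this
  have key := tail_Ioi' (fun t => -K (-t))
    (fun a b hab => neg_le_neg (hA (neg_le_neg hab)))
    (fun t => neg_nonneg.2 (h0 _)) hcomp.neg
  have := key.neg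
  simp only [neg_neg, neg_zero] at this
  exact this

theorem continuity_kills_bubble {Ω X : Type*} (𝒜 : SetAlgebra Ω) (m : FinAddProb 𝒜)
    (F : Set (Ω → X)) (V : (Ω → X) → ℝ) (u : X → ℝ) (x : X) (hux : u x = 0)
    (hclose : ∀ f ∈ F, ∀ A ∈ 𝒜.sets, (fun ω => if ω ∈ A then x else f ω) ∈ F)
    (hmeas : ∀ f ∈ F, AMeasurable 𝒜 (fun ω => u (f ω)) ∧
      (∀ k : ℝ, {ω | k < |u (f ω)|} ∈ 𝒜.sets) ∧
      FAIntegrable m.toFun (fun ω => u (f ω)))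
    (Φ : (Ω → ℝ) →ₗ[ℝ] ℝ)
    (hΦpos : ∀ g ∈ Submodule.span ℝ {g : Ω → ℝ | ∃ f ∈ F, g = fun ω => u (f ω)},
      (∀ ω, 0 ≤ g ω) → 0 ≤ Φ g)
    (hΦbdd : ∀ g ∈ Submodule.span ℝ {g : Ω → ℝ | ∃ f ∈ F, g = fun ω => u (f ω)},
      (∃ c : ℝ, ∀ ω, |g ω| ≤ c) → Φ g = 0)
    (hrep : ∀ f ∈ F, V f = Φ (fun ω => u (f ω)) + faInt m.toFun (fun ω => u (f ω)))
    (hcont : ∀ f ∈ F, ∀ A : ℕ → Set Ω, (∀ n, A n ∈ 𝒜.sets) →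
      Tendsto (fun n => m.toFun (A n)) atTop (nhds 0) →
      Tendsto (fun n => V (fun ω => if ω ∈ A n then x else f ω)) atTop (nhds (V f))) :
    ∀ f ∈ F, Φ (fun ω => u (f ω)) = 0 ∧ V f = faInt m.toFun (fun ω => u (f ω)) := by
  intro f hf
  obtain ⟨hAmeas, hAk, hInt⟩ := hmeas f hf
  set g : Ω → ℝ := fun ω => u (f ω) with hg
  set G : ℝ → ℝ := fun t => m.toFun {ω | t < g ω} with hG
  -- basic facts about m
  have hunivmem : Set.univ ∈ 𝒜.sets := by
    have := 𝒜.compl_mem ∅ 𝒜.empty_mem; simpa using this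
  have hle_one : ∀ A ∈ 𝒜.sets, m.toFun A ≤ 1 := by
    intro A hA
    have := m.mono A hA Set.univ hunivmem (Set.subset_univ A)
    rwa [m.univ] at this
  have hcompl : ∀ A ∈ 𝒜.sets, m.toFun Aᶜ = 1 - m.toFun A := by
    intro A hA
    have h1 : m.toFun (A ∪ Aᶜ) = m.toFun A + m.toFun Aᶜ :=
      m.additive A hA Aᶜ (𝒜.compl_mem A hA) disjoint_compl_right
    rw [Set.union_compl_self, m.univ] at h1
    linarith
  have hinter : ∀ A ∈ 𝒜.sets, ∀ B ∈ 𝒜.sets, A ∩ B ∈ 𝒜.sets := by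
    intro A hA B hB
    have hABc : A ∩ B = (Aᶜ ∪ Bᶜ)ᶜ := by simp [Set.compl_union]
    rw [hABc]
    exact 𝒜.compl_mem _ (𝒜.union_mem _ (𝒜.compl_mem A hA) _ (𝒜.compl_mem B hB))
  have hsubadd : ∀ A ∈ 𝒜.sets, ∀ B ∈ 𝒜.sets, m.toFun (A ∪ B) ≤ m.toFun A + m.toFun B := by
    intro A hA B hB
    have hBA : B ∩ Aᶜ ∈ 𝒜.sets := hinter B hB Aᶜ (𝒜.compl_mem A hA)
    have hU : A ∪ B = A ∪ (B ∩ Aᶜ) := by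
      ext ω; by_cases h : ω ∈ A <;> simp [h]
    rw [hU, m.additive A hA _ hBA (disjoint_compl_right.mono_right Set.inter_subset_right)]
    have := m.mono _ hBA B hB Set.inter_subset_left
    linarith
  -- properties of G
  have hGanti : Antitone G := by
    intro s t hst
    exact m.mono _ (hAmeas t).1 _ (hAmeas s).1 (fun ω h => lt_of_le_of_lt hst h)
  have hGnn : ∀ t, 0 ≤ G t := fun t => m.nonneg _
  have hGle1 : ∀ t, G t ≤ 1 := fun t => hle_one _ (hAmeas t).1
  have hGint : IntegrableOn G (Set.Ioi 0) volume := hInt.1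
  have hKint : IntegrableOn (fun t => G t - 1) (Set.Iio 0) volume := hInt.2
  have hGtail : Tendsto (fun n : ℕ => G n) atTop (nhds 0) := tail_Ioi' G hGanti hGnn hGint
  have hKtail : Tendsto (fun n : ℕ => 1 - G (-(n:ℝ))) atTop (nhds 0) := by
    have := (tail_Iio' (fun t => G t - 1)
      (fun a b hab => sub_le_sub_right (hGanti hab) 1)
      (fun t => sub_nonpos.2 (hGle1 t)) hKint).neg
    simpa [neg_sub] using this
  -- the small sets
  set A : ℕ → Set Ω := fun n => {ω | (n:ℝ) < |g ω|} with hA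
  have hAmem : ∀ n : ℕ, A n ∈ 𝒜.sets := fun n => hAk n
  have hneg_mem : ∀ t : ℝ, {ω | g ω < t} ∈ 𝒜.sets := fun t => (hAmeas t).2
  have hAsplit : ∀ n : ℕ, m.toFun (A n) = G n + m.toFun {ω | g ω < -(n:ℝ)} := by
    intro n
    have hset : A n = {ω | (n:ℝ) < g ω} ∪ {ω | g ω < -(n:ℝ)} := by
      ext ω
      simp only [hA, Set.mem_setOf_eq, Set.mem_union, lt_abs]
      constructor
      · rintro (h | h); · exact Or.inl h
        · exact Or.inr (by linarith)
      · rintro (h | h); · exact Or.inl h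
        · exact Or.inr (by linarith)
    rw [hset, m.additive _ (hAmeas ((n:ℝ))).1 _ (hneg_mem (-(n:ℝ)))]
    exact Set.disjoint_left.2 fun ω h1 h2 => by
      simp only [Set.mem_setOf_eq] at h1 h2
      have : (0:ℝ) ≤ n := Nat.cast_nonneg n
      linarith
  have hneg_tail : Tendsto (fun n : ℕ => m.toFun {ω | g ω < -(n:ℝ)}) atTop (nhds 0) := by
    refine squeeze_zero (fun n => m.nonneg _) (fun n => ?_) hKtail
    have hsub : {ω | g ω < -(n:ℝ)} ⊆ {ω | (-(n:ℝ)) < g ω}ᶜ := fun ω h => by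
      simp only [Set.mem_compl_iff, Set.mem_setOf_eq] at *
      linarith
    calc m.toFun {ω | g ω < -(n:ℝ)} ≤ m.toFun {ω | (-(n:ℝ)) < g ω}ᶜ :=
          m.mono _ (hneg_mem _) _ (𝒜.compl_mem _ (hAmeas _).1) hsub
      _ = 1 - G (-(n:ℝ)) := hcompl _ (hAmeas _).1
  have hμ : Tendsto (fun n => m.toFun (A n)) atTop (nhds 0) := by
    have h2 := hGtail.add hneg_tail
    rw [add_zero] at h2
    exact h2.congr fun n => (hAsplit n).symm
  -- the truncated acts
  set fn : ℕ → Ω → X := fun n ω => if ω ∈ A n then x else f ω with hfn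
  have hfnF : ∀ n, fn n ∈ F := fun n => hclose f hf (A n) (hAmem n)
  have hval : ∀ n ω, u (fn n ω) = if ω ∈ A n then 0 else g ω := by
    intro n ω
    by_cases hω : ω ∈ A n <;> simp [hfn, hω, hux, hg]
  have hmain : ∀ n, AMeasurable 𝒜 (fun ω => u (fn n ω)) := fun n => (hmeas (fn n) (hfnF n)).1
  set Gn : ℕ → ℝ → ℝ := fun n t => m.toFun {ω | t < u (fn n ω)} with hGn
  have hGnanti : ∀ n, Antitone (Gn n) := by
    intro n s t hst
    exact m.mono _ (hmain n t).1 _ (hmain n s).1 (fun ω h => lt_of_le_of_lt hst h)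
  have hGnnn : ∀ n t, 0 ≤ Gn n t := fun n t => m.nonneg _
  have hGnle1 : ∀ n t, Gn n t ≤ 1 := fun n t => hle_one _ (hmain n t).1
  -- comparisons for t > 0
  have hpos1 : ∀ n, ∀ t > (0:ℝ), Gn n t ≤ G t := by
    intro n t ht
    refine m.mono _ (hmain n t).1 _ (hAmeas t).1 fun ω hω => ?_
    simp only [Set.mem_setOf_eq] at *
    rw [hval n ω] at hω
    by_cases h' : ω ∈ A n
    · rw [if_pos h'] at hω; linarith
    · rwa [if_neg h'] at hω
  have hpos2 : ∀ n, ∀ t > (0:ℝ), G t ≤ Gn n t + m.toFun (A n) := by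
    intro n t ht
    have hsub : {ω | t < g ω} ⊆ {ω | t < u (fn n ω)} ∪ A n := by
      intro ω hω
      by_cases h' : ω ∈ A n
      · exact Or.inr h'
      · left
        simp only [Set.mem_setOf_eq] at *
        rw [hval n ω, if_neg h']
        exact hω
    calc G t ≤ m.toFun ({ω | t < u (fn n ω)} ∪ A n) :=
          m.mono _ (hAmeas t).1 _ (𝒜.union_mem _ (hmain n t).1 _ (hAmem n)) hsub
      _ ≤ Gn n t + m.toFun (A n) := hsubadd _ (hmain n t).1 _ (hAmem n)
  -- comparisons for t < 0
  have hneg1 : ∀ n, ∀ t < (0:ℝ), G t ≤ Gn n t := by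
    intro n t ht
    refine m.mono _ (hAmeas t).1 _ (hmain n t).1 fun ω hω => ?_
    simp only [Set.mem_setOf_eq] at *
    rw [hval n ω]
    by_cases h' : ω ∈ A n
    · rw [if_pos h']; linarith
    · rwa [if_neg h']
  have hneg2 : ∀ n, ∀ t < (0:ℝ), Gn n t ≤ G t + m.toFun (A n) := by
    intro n t ht
    have hsub : {ω | t < u (fn n ω)} ⊆ {ω | t < g ω} ∪ A n := by
      intro ω hω
      by_cases h' : ω ∈ A n
      · exact Or.inr h'
      · left
        simp only [Set.mem_setOf_eq] at *
        rw [hval n ω, if_neg h'] at hω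
        exact hω
    calc Gn n t ≤ m.toFun ({ω | t < g ω} ∪ A n) :=
          m.mono _ (hmain n t).1 _ (𝒜.union_mem _ (hAmeas t).1 _ (hAmem n)) hsub
      _ ≤ G t + m.toFun (A n) := hsubadd _ (hAmeas t).1 _ (hAmem n)
  -- dominated convergence, positive part
  have hDCTpos : Tendsto (fun n => ∫ t in Set.Ioi (0:ℝ), Gn n t) atTop
      (nhds (∫ t in Set.Ioi (0:ℝ), G t)) := by
    refine tendsto_integral_of_dominated_convergence G
      (fun n => ((hGnanti n).measurable).aestronglyMeasurable) hGint ?_ ?_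
    · intro n
      filter_upwards [ae_restrict_mem measurableSet_Ioi] with t ht
      rw [Real.norm_eq_abs, abs_of_nonneg (hGnnn n t)]
      exact hpos1 n t ht
    · filter_upwards [ae_restrict_mem measurableSet_Ioi] with t ht
      rw [tendsto_iff_norm_sub_tendsto_zero]
      refine squeeze_zero (fun n => norm_nonneg _) (fun n => ?_) hμ
      rw [Real.norm_eq_abs, abs_le]
      constructor
      · have := hpos2 n t ht; linarith
      · have := hpos1 n t ht
        have := m.nonneg (A n)
        linarith
  -- dominated convergence, negative part
  have hbd_int : IntegrableOn (fun t => 1 - G t) (Set.Iio 0) volume := by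
    have h := hKint.neg
    exact h.congr (Filter.EventuallyEq.of_eq (funext fun t => by simp [neg_sub]))
  have hDCTneg : Tendsto (fun n => ∫ t in Set.Iio (0:ℝ), (Gn n t - 1)) atTop
      (nhds (∫ t in Set.Iio (0:ℝ), (G t - 1))) := by
    have hGn1anti : ∀ n, Antitone (fun t => Gn n t - 1) :=
      fun n s t hst => sub_le_sub_right ((hGnanti n) hst) 1
    refine tendsto_integral_of_dominated_convergence (fun t => 1 - G t)
      (fun n => ((hGn1anti n).measurable).aestronglyMeasurable) hbd_int ?_ ?_
    · intro n
      filter_upwards [ae_restrict_mem measurableSet_Iio] with t ht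
      rw [Real.norm_eq_abs, abs_of_nonpos (by linarith [hGnle1 n t])]
      have := hneg1 n t ht
      linarith
    · filter_upwards [ae_restrict_mem measurableSet_Iio] with t ht
      rw [tendsto_iff_norm_sub_tendsto_zero]
      refine squeeze_zero (fun n => norm_nonneg _) (fun n => ?_) hμ
      rw [Real.norm_eq_abs, abs_le]
      constructor
      · have := hneg1 n t ht
        have := m.nonneg (A n)
        linarith
      · have := hneg2 n t ht; linarith
  -- conclude
  have hΦn : ∀ n, Φ (fun ω => u (fn n ω)) = 0 := by
    intro n
    refine hΦbdd _ (Submodule.subset_span ⟨fn n, hfnF n, rfl⟩) ⟨(n:ℝ), fun ω => ?_⟩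
    rw [hval n ω]
    by_cases hω : ω ∈ A n
    · rw [if_pos hω]; simp
    · rw [if_neg hω]
      have h6 : ¬ ((n:ℝ) < |g ω|) := by simpa [hA] using hω
      linarith [not_lt.1 h6]
  have hVn : ∀ n, V (fn n) =
      (∫ t in Set.Ioi (0:ℝ), Gn n t) + ∫ t in Set.Iio (0:ℝ), (Gn n t - 1) := by
    intro n
    rw [hrep (fn n) (hfnF n), hΦn n, zero_add]
    rfl
  have hVconv : Tendsto (fun n => V (fn n)) atTop (nhds (V f)) := hcont f hf A hAmem hμ
  have hfaconv : Tendsto (fun n => V (fn n)) atTop (nhds (faInt m.toFun g)) := by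
    have h3 := hDCTpos.add hDCTneg
    have h4 : faInt m.toFun g =
        (∫ t in Set.Ioi (0:ℝ), G t) + ∫ t in Set.Iio (0:ℝ), (G t - 1) := rfl
    rw [h4]
    exact h3.congr fun n => (hVn n).symm
  have hVf : V f = faInt m.toFun g := tendsto_nhds_unique hVconv hfaconv
  have h5 := hrep f hf
  rw [← hg] at h5
  exact ⟨by linarith, hVf⟩
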